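/- arXiv:2505.06114 — 3 statements merged into one kernel-verified Lean document; each statement's English description precedes it below -/
import Mathlib

section
/- Let E be a real inner product space which is a complete normed space, let f : E → ℝ, and let f' : E → E be such that f has gradient f' x at every x (HasGradientAt). Suppose f' is Lipschitz with constant L > 0, let ε > 0, let x ∈ E with ‖f' x‖² ≥ ε, let 0 < η ≤ 2/L, and set g = (√ε / ‖f' x‖) • f' x. Then f (x − η • g) ≤ f x. -/
open Real

lemma descent_lemma_aux
    {E : Type*} [NormedAddCommGroup E] [InnerProductSpace ℝ E] [CompleteSpace E]
    (f : E → ℝ) (f' : E → E) (hgrad : ∀ x, HasGradientAt f (f' x) x)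
    (L : ℝ) (hL : 0 ≤ L) (hlip : ∀ x y : E, ‖f' x - f' y‖ ≤ L * ‖x - y‖)
    (x v : E) :
    f (x + v) ≤ f x + inner ℝ (f' x) v + L / 2 * ‖v‖ ^ 2 := by
  set h : ℝ → ℝ := fun t =>
    f (x + t • v) - t * inner ℝ (f' x) v - L * t ^ 2 / 2 * ‖v‖ ^ 2 with hh
  have hline : ∀ t : ℝ, HasDerivAt (fun s : ℝ => x + s • v) v t := by
    intro t
    simpa using ((hasDerivAt_id t).smul_const v).const_add x
  have hd : ∀ t : ℝ, HasDerivAt h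
      ((inner ℝ (f' (x + t • v)) v : ℝ) - inner ℝ (f' x) v - L * t * ‖v‖ ^ 2) t := by
    intro t
    have h1 : HasDerivAt (fun s : ℝ => f (x + s • v))
        ((inner ℝ (f' (x + t • v)) v : ℝ)) t := by
      have := ((hgrad (x + t • v)).hasFDerivAt.comp t (hline t)).hasDerivAt
      simp at this
      exact this
    have h2 : HasDerivAt (fun s : ℝ => s * (inner ℝ (f' x) v : ℝ))
        (inner ℝ (f' x) v : ℝ) t := by simpa using (hasDerivAt_id t).mul_const _
    have h3 : HasDerivAt (fun s : ℝ => L * s ^ 2 / 2 * ‖v‖ ^ 2)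
        (L * t * ‖v‖ ^ 2) t := by
      have : HasDerivAt (fun s : ℝ => s ^ 2) (2 * t) t := by
        simpa using hasDerivAt_pow 2 t
      have := ((this.const_mul L).div_const 2).mul_const (‖v‖ ^ 2)
      rw [show L * t * ‖v‖ ^ 2 = L * (2 * t) / 2 * ‖v‖ ^ 2 by ring]
      exact this
    exact (h1.sub h2).sub h3
  have hmono : AntitoneOn h (Set.Icc 0 1) := by
    apply antitoneOn_of_deriv_nonpos (convex_Icc 0 1)
    · exact Continuous.continuousOn (by
        have : Differentiable ℝ h := fun t => (hd t).differentiableAt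
        exact this.continuous)
    · intro t _
      exact (hd t).differentiableAt.differentiableWithinAt
    · intro t ht
      rw [interior_Icc] at ht
      rw [(hd t).deriv]
      have hcs : (inner ℝ (f' (x + t • v)) v : ℝ) - inner ℝ (f' x) v
          ≤ ‖f' (x + t • v) - f' x‖ * ‖v‖ := by
        rw [← inner_sub_left]
        exact real_inner_le_norm _ _
      have hl : ‖f' (x + t • v) - f' x‖ * ‖v‖ ≤ L * t * ‖v‖ ^ 2 := by
        calc ‖f' (x + t • v) - f' x‖ * ‖v‖ ≤ (L * ‖(x + t • v) - x‖) * ‖v‖ := by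
              exact mul_le_mul_of_nonneg_right (hlip _ _) (norm_nonneg _)
          _ = L * t * ‖v‖ ^ 2 := by
              rw [add_sub_cancel_left, norm_smul, Real.norm_eq_abs,
                abs_of_pos ht.1]
              ring
      linarith
  have := hmono (Set.left_mem_Icc.mpr zero_le_one) (Set.right_mem_Icc.mpr zero_le_one) zero_le_one
  simp only [hh] at this
  simp only [one_smul, zero_smul, add_zero, one_mul, one_pow, zero_pow, mul_zero,
    zero_mul, zero_div, sub_zero, mul_one] at this
  linarith

theorem fic_step_sufficient_decrease
    {E : Type*} [NormedAddCommGroup E] [InnerProductSpace ℝ E] [CompleteSpace E]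
    (f : E → ℝ) (f' : E → E) (hgrad : ∀ x, HasGradientAt f (f' x) x)
    (L : ℝ) (hL : 0 < L) (hlip : ∀ x y : E, ‖f' x - f' y‖ ≤ L * ‖x - y‖)
    (ε : ℝ) (hε : 0 < ε) (x : E) (hx : ε ≤ ‖f' x‖ ^ 2)
    (η : ℝ) (hη : 0 < η) (hη2 : η ≤ 2 / L)
    (g : E) (hg : g = (Real.sqrt ε / ‖f' x‖) • f' x) :
    f (x - η • g) ≤ f x := by
  have hfx : 0 < ‖f' x‖ := by
    nlinarith [norm_nonneg (f' x), Real.sq_sqrt hε.le, Real.sqrt_pos.mpr hε]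
  have hsqrt : Real.sqrt ε ≤ ‖f' x‖ := by
    rw [show ‖f' x‖ = Real.sqrt (‖f' x‖ ^ 2) by rw [Real.sqrt_sq (norm_nonneg _)]]
    exact Real.sqrt_le_sqrt hx
  have key := descent_lemma_aux f f' hgrad L hL.le hlip x (-(η • g))
  rw [show x + -(η • g) = x - η • g by abel] at key
  have hinner : (inner ℝ (f' x) (-(η • g)) : ℝ) = -(η * (Real.sqrt ε * ‖f' x‖)) := by
    rw [hg, inner_neg_right, inner_smul_right, inner_smul_right,
      real_inner_self_eq_norm_sq]
    field_simp
  have hnorm : ‖-(η • g)‖ ^ 2 = η ^ 2 * ε := by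
    rw [norm_neg, norm_smul, hg, norm_smul, Real.norm_eq_abs, Real.norm_eq_abs,
      abs_of_pos hη, abs_of_pos (div_pos (Real.sqrt_pos.mpr hε) hfx)]
    rw [mul_pow, mul_pow, div_pow, Real.sq_sqrt hε.le]
    field_simp
  rw [hinner, hnorm] at key
  have hsq : 0 < Real.sqrt ε := Real.sqrt_pos.mpr hε
  have hε' : ε = Real.sqrt ε * Real.sqrt ε := (Real.mul_self_sqrt hε.le).symm
  have h1 : L * η ≤ 2 := by
    rw [div_eq_mul_inv] at hη2
    calc L * η ≤ L * (2 * L⁻¹) := by nlinarith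
      _ = 2 := by field_simp
  -- need: -(η * (√ε * ‖f' x‖)) + L/2 * (η^2 * ε) ≤ 0
  nlinarith [mul_le_mul_of_nonneg_left hsqrt (mul_pos hη hsq).le,
    mul_pos hη hsq]
end

section
/- Let E be a real inner product space which is a complete normed space, let f : E → ℝ, and let f' : E → E be such that f has gradient f' x at every x (HasGradientAt) and f' is Lipschitz with constant L ≥ 0. Let B ∈ ℝ satisfy B ≤ f z for all z ∈ E. Let η > 0, ε ≥ 0, and let θ : ℕ → E and g : ℕ → E satisfy θ (t+1) = θ t − η • g t and ‖g t‖² ≤ ε for all t. Then for every T ≥ 1, (1/T) · Σ_{t=0}^{T−1} ⟪f' (θ t), g t⟫ ≤ (f (θ 0) − B)/(η · T) + (L · ε · η)/2. -/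
open scoped RealInnerProductSpace
open intervalIntegral

private theorem fic_descent_lemma
    {E : Type*} [NormedAddCommGroup E] [InnerProductSpace ℝ E] [CompleteSpace E]
    (f : E → ℝ) (f' : E → E) (hgrad : ∀ x, HasGradientAt f (f' x) x)
    (L : ℝ) (hL : 0 ≤ L) (hlip : ∀ x y : E, ‖f' x - f' y‖ ≤ L * ‖x - y‖)
    (x v : E) : f (x + v) ≤ f x + ⟪f' x, v⟫ + L / 2 * ‖v‖ ^ 2 := by
  have hcont : Continuous f' := by
    refine (LipschitzWith.of_dist_le_mul (K := ⟨L, hL⟩) ?_).continuous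
    intro a b
    rw [dist_eq_norm, dist_eq_norm]; exact hlip a b
  set φ : ℝ → E := fun t => x + t • v with hφ
  have hφd : ∀ t : ℝ, HasDerivAt φ v t := fun t => by
    simpa [hφ] using ((hasDerivAt_id t).smul_const v).const_add x
  have hderiv : ∀ t : ℝ, HasDerivAt (fun t => f (φ t)) ⟪f' (φ t), v⟫ t := by
    intro t
    have h1 := ((hgrad (φ t)).hasFDerivAt).comp_hasDerivAt t (hφd t)
    simpa [InnerProductSpace.toDual_apply_apply, Function.comp_def] using h1
  have hcontψ : Continuous fun t : ℝ => ⟪f' (φ t), v⟫ :=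
    continuous_inner.comp ((hcont.comp (show Continuous φ by rw [hφ]; fun_prop)).prodMk continuous_const)
  have hint : IntervalIntegrable (fun t : ℝ => ⟪f' (φ t), v⟫) MeasureTheory.volume 0 1 :=
    hcontψ.intervalIntegrable 0 1
  have heq : ∫ t in (0:ℝ)..1, ⟪f' (φ t), v⟫ = f (φ 1) - f (φ 0) :=
    integral_eq_sub_of_hasDerivAt (fun t _ => hderiv t) hint
  have hmono : ∫ t in (0:ℝ)..1, ⟪f' (φ t), v⟫ ≤
      ∫ t in (0:ℝ)..1, (⟪f' x, v⟫ + L * t * ‖v‖ ^ 2) := by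
    refine integral_mono_on (by norm_num) hint ?_ ?_
    · exact ((continuous_const).add (by continuity)).intervalIntegrable 0 1
    · intro t ht
      rcases ht with ⟨ht0, ht1⟩
      have hsplit : ⟪f' (φ t), v⟫ - ⟪f' x, v⟫ = ⟪f' (φ t) - f' x, v⟫ := by
        rw [inner_sub_left]
      have hb : ⟪f' (φ t) - f' x, v⟫ ≤ ‖f' (φ t) - f' x‖ * ‖v‖ :=
        real_inner_le_norm _ _
      have hl : ‖f' (φ t) - f' x‖ ≤ L * (t * ‖v‖) := by
        have := hlip (φ t) x
        simpa [hφ, norm_smul, abs_of_nonneg ht0] using this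
      nlinarith [norm_nonneg v, norm_nonneg (f' (φ t) - f' x), mul_nonneg hL ht0]
  have hval : ∫ t in (0:ℝ)..1, (⟪f' x, v⟫ + L * t * ‖v‖ ^ 2) =
      ⟪f' x, v⟫ + L / 2 * ‖v‖ ^ 2 := by
    have hfe : (fun t : ℝ => ⟪f' x, v⟫ + L * t * ‖v‖ ^ 2)
        = fun t : ℝ => ⟪f' x, v⟫ + (L * ‖v‖ ^ 2) * t := by ext t; ring
    rw [hfe, integral_add intervalIntegrable_const
      ((intervalIntegral.intervalIntegrable_id
        (μ := MeasureTheory.volume) (a := (0:ℝ)) (b := 1)).const_mul (L * ‖v‖ ^ 2)),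
      integral_const_mul, integral_id, integral_const]
    norm_num; ring
  have h0 : φ 0 = x := by simp [hφ]
  have h1 : φ 1 = x + v := by simp [hφ]
  have := heq ▸ (hval ▸ hmono)
  rw [h0, h1] at this
  linarith

theorem fic_telescoped_bound
    {E : Type*} [NormedAddCommGroup E] [InnerProductSpace ℝ E] [CompleteSpace E]
    (f : E → ℝ) (f' : E → E) (hgrad : ∀ x, HasGradientAt f (f' x) x)
    (L : ℝ) (hL : 0 ≤ L) (hlip : ∀ x y : E, ‖f' x - f' y‖ ≤ L * ‖x - y‖)
    (B : ℝ) (hB : ∀ z : E, B ≤ f z)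
    (η : ℝ) (hη : 0 < η) (ε : ℝ) (hε : 0 ≤ ε)
    (θ : ℕ → E) (g : ℕ → E)
    (hupdate : ∀ t, θ (t + 1) = θ t - η • g t)
    (hg : ∀ t, ‖g t‖ ^ 2 ≤ ε) :
    ∀ T : ℕ, 1 ≤ T →
      (1 / (T : ℝ)) * ∑ t ∈ Finset.range T, ⟪f' (θ t), g t⟫ ≤
        (f (θ 0) - B) / (η * T) + L * ε * η / 2 := by
  have hstep : ∀ t : ℕ, η * ⟪f' (θ t), g t⟫ ≤
      f (θ t) - f (θ (t + 1)) + L * ε * η ^ 2 / 2 := by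
    intro t
    have hd := fic_descent_lemma f f' hgrad L hL hlip (θ t) (-(η • g t))
    have hrw : θ t + -(η • g t) = θ (t + 1) := by
      rw [hupdate t]; abel
    rw [hrw] at hd
    have hin : ⟪f' (θ t), -(η • g t)⟫ = -(η * ⟪f' (θ t), g t⟫) := by
      rw [inner_neg_right, real_inner_smul_right]
    have hnorm : ‖-(η • g t)‖ ^ 2 = η ^ 2 * ‖g t‖ ^ 2 := by
      rw [norm_neg, norm_smul]
      simp [mul_pow, abs_of_pos hη]
    rw [hin, hnorm] at hd
    nlinarith [mul_le_mul_of_nonneg_left (hg t) (mul_nonneg hL (sq_nonneg η))]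
  intro T hT
  have hT0 : (0:ℝ) < T := by exact_mod_cast Nat.lt_of_lt_of_le Nat.zero_lt_one hT
  have hsum : η * ∑ t ∈ Finset.range T, ⟪f' (θ t), g t⟫ ≤
      (f (θ 0) - B) + T * (L * ε * η ^ 2 / 2) := by
    have h1 : ∑ t ∈ Finset.range T, (η * ⟪f' (θ t), g t⟫) ≤
        ∑ t ∈ Finset.range T, (f (θ t) - f (θ (t + 1)) + L * ε * η ^ 2 / 2) :=
      Finset.sum_le_sum fun t _ => hstep t
    rw [Finset.sum_add_distrib, Finset.sum_range_sub' (fun t => f (θ t)) T,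
      Finset.sum_const] at h1
    have hfb := hB (θ T)
    simp only [Finset.card_range, nsmul_eq_mul] at h1
    rw [Finset.mul_sum]
    linarith
  have h2 : (1 / (T:ℝ)) * ∑ t ∈ Finset.range T, ⟪f' (θ t), g t⟫ =
      (η * ∑ t ∈ Finset.range T, ⟪f' (θ t), g t⟫) / (η * T) := by
    field_simp
  have h3 : (f (θ 0) - B) / (η * T) + L * ε * η / 2 =
      ((f (θ 0) - B) + T * (L * ε * η ^ 2 / 2)) / (η * T) := by
    field_simp
  rw [h2, h3]
  exact div_le_div_of_nonneg_right hsum (by positivity) |>.trans_eq rfl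
end

section
/- Let E be a real inner product space which is a complete normed space, let f : E → ℝ, and let f' : E → E be such that f has gradient f' x at every x (HasGradientAt) and f' is Lipschitz with constant L ≥ 0. Let B ∈ ℝ satisfy B ≤ f z for all z ∈ E. Let η > 0 and ε > 0, and let θ : ℕ → E evolve by FIC gradient descent: θ (t+1) = θ t − η • c t • f' (θ t), where c t = 1 if ‖f' (θ t)‖² ≤ ε and c t = √(ε / ‖f' (θ t)‖²) otherwise. Then for every T ≥ 1 there exists t < T such that min (‖f' (θ t)‖²) ε ≤ (f (θ 0) − B)/(η · T) + (L · ε · η)/2. -/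
open Real InnerProductSpace

lemma descent_lemma_fic
    {E : Type*} [NormedAddCommGroup E] [InnerProductSpace ℝ E] [CompleteSpace E]
    (f : E → ℝ) (f' : E → E) (hgrad : ∀ x, HasGradientAt f (f' x) x)
    (L : ℝ) (hlip : ∀ x y : E, ‖f' x - f' y‖ ≤ L * ‖x - y‖)
    (x y : E) :
    f y ≤ f x + ⟪f' x, y - x⟫_ℝ + L / 2 * ‖y - x‖ ^ 2 := by
  set v := y - x with hv
  set h : ℝ → ℝ := fun s => f (x + s • v) - s * ⟪f' x, v⟫_ℝ - L * s ^ 2 * ‖v‖ ^ 2 / 2 with hh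
  have hderiv : ∀ s : ℝ, HasDerivAt h
      (⟪f' (x + s • v), v⟫_ℝ - ⟪f' x, v⟫_ℝ - L * s * ‖v‖ ^ 2) s := by
    intro s
    have hcurve : HasDerivAt (fun s : ℝ => x + s • v) v s := by
      simpa using ((hasDerivAt_id s).smul_const v).const_add x
    have h1 : HasDerivAt (fun s : ℝ => f (x + s • v)) (⟪f' (x + s • v), v⟫_ℝ) s := by
      have := ((hgrad (x + s • v)).hasFDerivAt).comp_hasDerivAt s hcurve
      simp at this; exact this
    have h2 : HasDerivAt (fun s : ℝ => s * ⟪f' x, v⟫_ℝ) (⟪f' x, v⟫_ℝ) s := by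
      simpa using (hasDerivAt_id s).mul_const (⟪f' x, v⟫_ℝ)
    have h3 : HasDerivAt (fun s : ℝ => L * s ^ 2 * ‖v‖ ^ 2 / 2) (L * s * ‖v‖ ^ 2) s := by
      have : HasDerivAt (fun s : ℝ => s ^ 2) (2 * s) s := by
        simpa using hasDerivAt_pow 2 s
      have := ((this.const_mul L).mul_const (‖v‖ ^ 2)).div_const 2
      exact this.congr_deriv (by ring)
    exact (h1.sub h2).sub h3
  have hanti : AntitoneOn h (Set.Icc 0 1) := by
    apply antitoneOn_of_deriv_nonpos (convex_Icc 0 1)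
    · exact Continuous.continuousOn (by
        have : Differentiable ℝ h := fun s => (hderiv s).differentiableAt
        exact this.continuous)
    · intro s hs
      exact (hderiv s).differentiableAt.differentiableWithinAt
    · intro s hs
      rw [interior_Icc] at hs
      rw [(hderiv s).deriv]
      have hbound : ⟪f' (x + s • v) - f' x, v⟫_ℝ ≤ L * s * ‖v‖ ^ 2 := by
        calc ⟪f' (x + s • v) - f' x, v⟫_ℝ ≤ ‖f' (x + s • v) - f' x‖ * ‖v‖ :=
              real_inner_le_norm _ _
          _ ≤ (L * ‖(x + s • v) - x‖) * ‖v‖ := by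
              apply mul_le_mul_of_nonneg_right (hlip _ _) (norm_nonneg _)
          _ = L * s * ‖v‖ ^ 2 := by
              rw [add_sub_cancel_left, norm_smul, Real.norm_eq_abs,
                abs_of_pos hs.1]; ring
      rw [inner_sub_left] at hbound
      linarith
  have := hanti (Set.left_mem_Icc.2 zero_le_one) (Set.right_mem_Icc.2 zero_le_one) zero_le_one
  simp only [hh] at this
  have hxy : x + (1 : ℝ) • v = y := by simp [hv]
  rw [hxy] at this
  simp at this
  linarith

theorem fic_gradient_descent_convergence
    {E : Type*} [NormedAddCommGroup E] [InnerProductSpace ℝ E] [CompleteSpace E]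
    (f : E → ℝ) (f' : E → E) (hgrad : ∀ x, HasGradientAt f (f' x) x)
    (L : ℝ) (hL : 0 ≤ L) (hlip : ∀ x y : E, ‖f' x - f' y‖ ≤ L * ‖x - y‖)
    (B : ℝ) (hB : ∀ z : E, B ≤ f z)
    (η : ℝ) (hη : 0 < η) (ε : ℝ) (hε : 0 < ε)
    (θ : ℕ → E) (c : ℕ → ℝ)
    (hc : ∀ t, c t = if ‖f' (θ t)‖ ^ 2 ≤ ε then (1 : ℝ)
                     else Real.sqrt (ε / ‖f' (θ t)‖ ^ 2))
    (hupdate : ∀ t, θ (t + 1) = θ t - η • c t • f' (θ t)) :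
    ∀ T : ℕ, 1 ≤ T → ∃ t < T,
      min (‖f' (θ t)‖ ^ 2) ε ≤ (f (θ 0) - B) / (η * T) + L * ε * η / 2 := by
  -- per-step inequality
  have key : ∀ t : ℕ,
      η * min (‖f' (θ t)‖ ^ 2) ε ≤ f (θ t) - f (θ (t + 1)) + L * η ^ 2 * ε / 2 := by
    intro t
    set g := f' (θ t) with hg
    have hcnonneg : 0 ≤ c t := by
      rw [hc t]; split
      · exact zero_le_one
      · exact Real.sqrt_nonneg _
    have hdes := descent_lemma_fic f f' hgrad L hlip (θ t) (θ (t + 1))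
    have hstep : θ (t + 1) - θ t = -((η * c t) • g) := by
      rw [hupdate t, smul_smul]; abel
    have hinner : ⟪g, θ (t + 1) - θ t⟫_ℝ = -(η * c t * ‖g‖ ^ 2) := by
      rw [hstep, inner_neg_right, real_inner_smul_right, real_inner_self_eq_norm_sq]
    have hnorm : ‖θ (t + 1) - θ t‖ ^ 2 = η ^ 2 * c t ^ 2 * ‖g‖ ^ 2 := by
      rw [hstep, norm_neg, norm_smul, Real.norm_eq_abs,
        abs_of_nonneg (mul_nonneg hη.le hcnonneg)]
      ring
    rw [hinner, hnorm] at hdes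
    -- hdes : f (θ (t+1)) ≤ f (θ t) - η c ‖g‖² + L/2 * (η² c² ‖g‖²)
    by_cases hcase : ‖g‖ ^ 2 ≤ ε
    · have hc1 : c t = 1 := by rw [hc t, if_pos hcase]
      rw [hc1] at hdes
      have hmin : min (‖g‖ ^ 2) ε = ‖g‖ ^ 2 := min_eq_left hcase
      rw [hmin]
      nlinarith [sq_nonneg ‖g‖, mul_le_mul_of_nonneg_left hcase
        (by positivity : (0:ℝ) ≤ L * η ^ 2 / 2)]
    · push_neg at hcase
      have hgpos : 0 < ‖g‖ ^ 2 := lt_trans hε hcase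
      have hc2 : c t = Real.sqrt (ε / ‖g‖ ^ 2) := by rw [hc t, if_neg (not_le.2 hcase)]
      have hcsq : c t ^ 2 = ε / ‖g‖ ^ 2 := by
        rw [hc2, Real.sq_sqrt (by positivity)]
      have hcsqg : c t ^ 2 * ‖g‖ ^ 2 = ε := by
        rw [hcsq]; exact div_mul_cancel₀ ε hgpos.ne'
      have hclb : ε ≤ c t * ‖g‖ ^ 2 := by
        have hp : 0 ≤ c t * ‖g‖ ^ 2 := mul_nonneg hcnonneg (sq_nonneg _)
        have hsq : (c t * ‖g‖ ^ 2) ^ 2 = ε * ‖g‖ ^ 2 := by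
          rw [mul_pow, ← hcsqg]; ring
        nlinarith [hcase, hε]
      have hmin : min (‖g‖ ^ 2) ε = ε := min_eq_right hcase.le
      rw [hmin]
      have h2 : L / 2 * (η ^ 2 * c t ^ 2 * ‖g‖ ^ 2) = L * η ^ 2 * ε / 2 := by
        rw [show η ^ 2 * c t ^ 2 * ‖g‖ ^ 2 = η ^ 2 * (c t ^ 2 * ‖g‖ ^ 2) by ring, hcsqg]
        ring
      rw [h2] at hdes
      nlinarith [mul_le_mul_of_nonneg_left hclb hη.le]
  -- sum and contradiction
  intro T hT
  by_contra hcon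
  push_neg at hcon
  have hTpos : (0 : ℝ) < T := by exact_mod_cast hT
  set D := (f (θ 0) - B) / (η * T) + L * ε * η / 2 with hD
  have hsum : ∀ t ∈ Finset.range T, η * D < η * min (‖f' (θ t)‖ ^ 2) ε := by
    intro t ht
    exact mul_lt_mul_of_pos_left (hcon t (Finset.mem_range.1 ht)) hη
  have htele : ∑ t ∈ Finset.range T, (f (θ t) - f (θ (t + 1))) = f (θ 0) - f (θ T) := by
    rw [← Finset.sum_range_sub' (fun t => f (θ t)) T]
  have hbig : (T : ℝ) * (η * D) < f (θ 0) - f (θ T) + T * (L * η ^ 2 * ε / 2) := by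
    calc (T : ℝ) * (η * D)
        = ∑ _t ∈ Finset.range T, η * D := by
          rw [Finset.sum_const, Finset.card_range, nsmul_eq_mul]
      _ < ∑ t ∈ Finset.range T, η * min (‖f' (θ t)‖ ^ 2) ε := by
          apply Finset.sum_lt_sum_of_nonempty
          · exact Finset.nonempty_range_iff.2 (by omega)
          · exact hsum
      _ ≤ ∑ t ∈ Finset.range T, (f (θ t) - f (θ (t + 1)) + L * η ^ 2 * ε / 2) :=
          Finset.sum_le_sum fun t _ => key t
      _ = f (θ 0) - f (θ T) + T * (L * η ^ 2 * ε / 2) := by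
          rw [Finset.sum_add_distrib, htele, Finset.sum_const, Finset.card_range,
            nsmul_eq_mul]
  have hfT : B ≤ f (θ T) := hB _
  have hTD : (T : ℝ) * (η * D) = f (θ 0) - B + T * (L * η ^ 2 * ε / 2) := by
    rw [hD]
    field_simp
  linarith
end
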